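/- Suppose that every simple rank-3 oriented matroid on n ≥ 8 elements has at least 6n/13 independent hyperplanes. Then every oriented paving matroid of rank r ≥ 3 on n elements with n ≥ 5+r has at least (12/(13(r-1)))·C(n,r-2) independent hyperplanes. -/

import Mathlib

open Set

variable {α : Type*}

namespace Matroid

/-- A circuit is a minimal dependent set. -/
def Circuit (M : Matroid α) (C : Set α) : Prop :=
  M.Dep C ∧ ∀ D, M.Dep D → D ⊆ C → D = C

/-- A hyperplane is a maximal proper flat. -/
def Hyperplane (M : Matroid α) (H : Set α) : Prop :=
  M.IsFlat H ∧ H ≠ M.E ∧ ∀ F, M.IsFlat F → H ⊆ F → F = H ∨ F = M.E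

/-- An independent hyperplane is a hyperplane that is an independent set. -/
def IndepHyperplane (M : Matroid α) (H : Set α) : Prop :=
  M.Hyperplane H ∧ M.Indep H

/-- `M` has rank `r` if some (equivalently, every) base has exactly `r` elements. -/
def HasRank (M : Matroid α) (r : ℕ) : Prop :=
  ∃ B, M.IsBase B ∧ B.ncard = r

/-- A matroid of rank `r` is paving if every circuit has `r` or `r + 1` elements. -/
def Paving (M : Matroid α) : Prop :=
  ∀ r, M.HasRank r → ∀ C, M.Circuit C → C.ncard = r ∨ C.ncard = r + 1

/-- `N` is the contraction `M / e` of `M` by a non-loop element `e`. -/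
def IsContractElem (M N : Matroid α) (e : α) : Prop :=
  N.E = M.E \ {e} ∧ ∀ I, N.Indep I ↔ e ∉ I ∧ M.Indep (insert e I)

/-- `M` has no loops. -/
def Loopless' (M : Matroid α) : Prop := ∀ e ∈ M.E, M.Indep {e}

/-- `M` is simple: it has no loops and no parallel elements, i.e. every subset of the
ground set with at most two elements is independent. -/
def Simple' (M : Matroid α) : Prop :=
  ∀ I ⊆ M.E, I.Finite → I.ncard ≤ 2 → M.Indep I

end Matroid

namespace Matroid

/-- A matroid is orientable if its circuits admit a signing satisfying symmetry and
the signed circuit elimination axiom. -/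
def Orientable (M : Matroid α) : Prop :=
  ∃ 𝒞 : Set (α → SignType),
    (∀ X ∈ 𝒞, M.Circuit {e | X e ≠ 0}) ∧
    (∀ C, M.Circuit C → ∃ X ∈ 𝒞, {e | X e ≠ 0} = C) ∧
    (∀ X ∈ 𝒞, (fun e => -X e) ∈ 𝒞) ∧
    (∀ X ∈ 𝒞, ∀ Y ∈ 𝒞, X ≠ (fun e => -Y e) → ∀ e, X e = 1 → Y e = -1 →
      ∃ Z ∈ 𝒞, Z e = 0 ∧
        ∀ f, (Z f = 1 → (X f = 1 ∨ Y f = 1)) ∧ (Z f = -1 → (X f = -1 ∨ Y f = -1)))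

end Matroid

namespace Matroid

variable {M N : Matroid α} {e : α} {r s : ℕ} {B C D I X H F : Set α}

lemma Finite.setFinite (hfin : M.Finite) (hX : X ⊆ M.E) : X.Finite :=
  hfin.ground_finite.subset hX

lemma exists_circuit_subset' (hfin : M.Finite) (hD : M.Dep D) :
    ∃ C, C ⊆ D ∧ M.Circuit C := by
  have hSfin : {C : Set α | C ⊆ D ∧ M.Dep C}.Finite :=
    ((hfin.setFinite hD.subset_ground).finite_subsets).subset (fun C hC => hC.1)
  obtain ⟨C, hCS, hmin⟩ := Set.exists_min_image _ Set.ncard hSfin ⟨D, Subset.rfl, hD⟩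
  refine ⟨C, hCS.1, hCS.2, fun D' hD' hD'C => ?_⟩
  exact eq_of_subset_of_ncard_le hD'C (hmin D' ⟨hD'C.trans hCS.1, hD'⟩)
    (hfin.setFinite hCS.2.subset_ground)

lemma Circuit.nonempty' (hC : M.Circuit C) : C.Nonempty := by
  rw [nonempty_iff_ne_empty]
  rintro rfl
  exact (dep_iff.1 hC.1).1 M.empty_indep

lemma HasRank.unique (h1 : M.HasRank r) (h2 : M.HasRank s) : r = s := by
  obtain ⟨B1, hB1, rfl⟩ := h1
  obtain ⟨B2, hB2, rfl⟩ := h2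
  exact hB1.ncard_eq_ncard_of_isBase hB2

lemma HasRank.base_ncard (hR : M.HasRank r) (hB : M.IsBase B) : B.ncard = r := by
  obtain ⟨B0, hB0, h0⟩ := hR
  rw [hB.ncard_eq_ncard_of_isBase hB0, h0]

lemma HasRank.indep_ncard_le (hR : M.HasRank r) (hfin : M.Finite) (hI : M.Indep I) :
    I.ncard ≤ r := by
  obtain ⟨B, hB, hIB⟩ := hI.exists_isBase_superset
  rw [← hR.base_ncard hB]
  exact ncard_le_ncard hIB (hfin.setFinite hB.subset_ground)

lemma HasRank.base_of_indep_ncard (hR : M.HasRank r) (hfin : M.Finite) (hI : M.Indep I)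
    (hcard : r ≤ I.ncard) : M.IsBase I := by
  obtain ⟨B, hB, hIB⟩ := hI.exists_isBase_superset
  have : I = B := eq_of_subset_of_ncard_le hIB (by rw [hR.base_ncard hB]; exact hcard)
    (hfin.setFinite hB.subset_ground)
  rwa [this]

lemma paving_indep_small (hfin : M.Finite) (hP : M.Paving) (hR : M.HasRank r)
    (hX : X ⊆ M.E) (hcard : X.ncard < r) : M.Indep X := by
  by_contra h
  obtain ⟨C, hCX, hC⟩ := exists_circuit_subset' hfin ⟨h, hX⟩
  have h1 := hP r hR C hC
  have hle : C.ncard ≤ X.ncard := ncard_le_ncard hCX (hfin.setFinite hX)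
  omega

lemma exists_isContractElem (hfin : M.Finite) (he : M.Indep {e}) :
    ∃ N : Matroid α, M.IsContractElem N e ∧ N.Finite := by
  have hEfin := hfin.ground_finite
  have h_empty : (e ∉ (∅ : Set α) ∧ M.Indep (insert e ∅)) := ⟨notMem_empty e, by simpa using he⟩
  have h_subset : ∀ ⦃I J : Set α⦄, (e ∉ J ∧ M.Indep (insert e J)) → I ⊆ J →
      (e ∉ I ∧ M.Indep (insert e I)) := by
    rintro I J ⟨heJ, hJ⟩ hIJ
    exact ⟨fun h => heJ (hIJ h), hJ.subset (insert_subset_insert hIJ)⟩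
  have h_aug : ∀ ⦃I J : Set α⦄, (e ∉ I ∧ M.Indep (insert e I)) → (e ∉ J ∧ M.Indep (insert e J)) →
      I.ncard < J.ncard → ∃ x ∈ J, x ∉ I ∧ (e ∉ insert x I ∧ M.Indep (insert e (insert x I))) := by
    rintro I J ⟨heI, hI⟩ ⟨heJ, hJ⟩ hlt
    have hIfin : I.Finite := hfin.setFinite ((subset_insert e I).trans hI.subset_ground)
    have hJfin : J.Finite := hfin.setFinite ((subset_insert e J).trans hJ.subset_ground)
    have henc : (insert e I).encard < (insert e J).encard := by
      rw [encard_insert_of_notMem heI, encard_insert_of_notMem heJ,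
        ← hIfin.cast_ncard_eq, ← hJfin.cast_ncard_eq]
      have h1 : (I.ncard : ℕ∞) < (J.ncard : ℕ∞) := by exact_mod_cast hlt
      exact (WithTop.add_lt_add_iff_right (by simp : (1:ℕ∞) ≠ ⊤)).2 h1
    obtain ⟨x, hx, hxi⟩ := hI.augment hJ henc
    have hxe : x ≠ e := fun h => hx.2 (h ▸ mem_insert e I)
    have hxJ : x ∈ J := (mem_insert_iff.1 hx.1).resolve_left hxe
    have hxI : x ∉ I := fun h => hx.2 (mem_insert_of_mem _ h)
    refine ⟨x, hxJ, hxI, ?_, ?_⟩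
    · simp only [mem_insert_iff, not_or]
      exact ⟨fun h => hxe h.symm, heI⟩
    · rwa [insert_comm]
  have h_ground : ∀ ⦃I : Set α⦄, (e ∉ I ∧ M.Indep (insert e I)) → I ⊆ M.E \ {e} := by
    rintro I ⟨heI, hI⟩
    exact subset_diff_singleton ((subset_insert e I).trans hI.subset_ground) heI
  refine ⟨(IndepMatroid.ofFinite (hEfin.diff (t := {e}))
      (fun I => e ∉ I ∧ M.Indep (insert e I)) h_empty h_subset h_aug h_ground).matroid,
    ⟨by simp, fun I => by simp⟩, ⟨by simpa using hEfin.diff (t := {e})⟩⟩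

lemma IsContractElem.dep_iff' (h : M.IsContractElem N e) (heE : e ∈ M.E) :
    N.Dep D ↔ e ∉ D ∧ D ⊆ M.E ∧ M.Dep (insert e D) := by
  rw [dep_iff, h.2 D, h.1]
  constructor
  · rintro ⟨hni, hsub⟩
    have heD : e ∉ D := fun h' => (hsub h').2 rfl
    have hDE : D ⊆ M.E := fun x hx => (hsub hx).1
    refine ⟨heD, hDE, dep_iff.2 ⟨fun hi => hni ⟨heD, hi⟩, insert_subset heE hDE⟩⟩
  · rintro ⟨heD, hDE, hdep⟩
    exact ⟨fun h' => (dep_iff.1 hdep).1 h'.2, subset_diff_singleton hDE heD⟩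

lemma IsContractElem.circuit_diff (h : M.IsContractElem N e) (heE : e ∈ M.E)
    (hC : M.Circuit C) (heC : e ∈ C) : N.Circuit (C \ {e}) := by
  constructor
  · rw [h.dep_iff' heE]
    refine ⟨fun h' => h'.2 rfl, diff_subset.trans hC.1.subset_ground, ?_⟩
    rw [insert_diff_singleton, insert_eq_of_mem heC]
    exact hC.1
  · intro D hD hsub
    rw [h.dep_iff' heE] at hD
    obtain ⟨heD, hDE, hdep⟩ := hD
    have h1 := hC.2 (insert e D) hdep (insert_subset heC (hsub.trans diff_subset))
    rw [← h1, insert_diff_of_mem _ (mem_singleton e), diff_singleton_eq_self heD]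

lemma IsContractElem.dep_diff_circuit (h : M.IsContractElem N e) (heE : e ∈ M.E)
    (hC : M.Circuit C) (hne : C ≠ {e}) : N.Dep (C \ {e}) := by
  by_cases heC : e ∈ C
  · exact (h.circuit_diff heE hC heC).1
  · rw [diff_singleton_eq_self heC, h.dep_iff' heE]
    refine ⟨heC, hC.1.subset_ground, hC.1.superset (subset_insert e C)
      (insert_subset heE hC.1.subset_ground)⟩

lemma IsContractElem.exists_circuit_of_circuit (h : M.IsContractElem N e) (heE : e ∈ M.E)
    (hfin : M.Finite) {C' : Set α} (hC' : N.Circuit C') :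
    ∃ D, M.Circuit D ∧ D ⊆ insert e C' ∧ D \ {e} = C' := by
  have hdep : M.Dep (insert e C') := ((h.dep_iff' heE).1 hC'.1).2.2
  obtain ⟨D, hDsub, hD⟩ := exists_circuit_subset' hfin hdep
  refine ⟨D, hD, hDsub, ?_⟩
  have heC' : e ∉ C' := ((h.dep_iff' heE).1 hC'.1).1
  have hsub2 : D \ {e} ⊆ C' := by
    intro x hx
    rcases mem_insert_iff.1 (hDsub hx.1) with h'|h'
    · exact absurd h' hx.2
    · exact h'
  have hdep2 : N.Dep (D \ {e}) := by
    rw [h.dep_iff' heE]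
    refine ⟨fun h' => h'.2 rfl, diff_subset.trans hD.1.subset_ground, ?_⟩
    by_cases heD : e ∈ D
    · rw [insert_diff_singleton, insert_eq_of_mem heD]
      exact hD.1
    · rw [diff_singleton_eq_self heD]
      exact hD.1.superset (subset_insert e D) (insert_subset heE hD.1.subset_ground)
  exact hC'.2 _ hdep2 hsub2

lemma IsContractElem.hasRank (h : M.IsContractElem N e) (hfin : M.Finite)
    (he : M.Indep {e}) (hR : M.HasRank r) : N.HasRank (r - 1) := by
  obtain ⟨B, hB, heB⟩ := he.exists_isBase_superset
  have heB' : e ∈ B := heB rfl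
  refine ⟨B \ {e}, ?_, by
    rw [ncard_diff_singleton_of_mem heB', hR.base_ncard hB]⟩
  rw [isBase_iff_maximal_indep]
  constructor
  · rw [h.2]
    exact ⟨fun h' => h'.2 rfl, by rw [insert_diff_singleton, insert_eq_of_mem heB']; exact hB.indep⟩
  · intro I hI hBI
    obtain ⟨heI, hIi⟩ := (h.2 I).1 hI
    have hBsub : B ⊆ insert e I := by
      intro x hxB
      by_cases hxe : x = e
      · exact hxe ▸ mem_insert e I
      · exact mem_insert_of_mem _ (hBI ⟨hxB, hxe⟩)
    have hBeq : B = insert e I := hB.eq_of_subset_indep hIi hBsub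
    intro x hxI
    refine ⟨hBeq ▸ mem_insert_of_mem _ hxI, fun hxe => heI (hxe ▸ hxI)⟩

lemma IsContractElem.paving (h : M.IsContractElem N e) (heE : e ∈ M.E) (he : M.Indep {e})
    (hfin : M.Finite) (hfinN : N.Finite) (hP : M.Paving) (hR : M.HasRank r) (hr : 3 ≤ r) :
    N.Paving := by
  intro r' hr' C' hC'
  have hNR : N.HasRank (r - 1) := h.hasRank hfin he hR
  have hrr' : r' = r - 1 := hr'.unique hNR
  subst hrr'
  obtain ⟨D, hD, hDsub, hDdiff⟩ := h.exists_circuit_of_circuit heE hfin hC'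
  have hDcard := hP r hR D hD
  have hDfin : D.Finite := hfin.setFinite hD.1.subset_ground
  by_cases heD : e ∈ D
  · have h1 : C'.ncard = D.ncard - 1 := by
      rw [← hDdiff, ncard_diff_singleton_of_mem heD]
    omega
  · have hDC' : D = C' := by rw [← hDdiff, diff_singleton_eq_self heD]
    rw [hDC'] at hDcard hDfin
    clear hDC' hDdiff hDsub hD
    obtain ⟨c, hc⟩ := hC'.nonempty'
    have hCE : C' ⊆ N.E := hC'.1.subset_ground
    have hind : N.Indep (C' \ {c}) := by
      rw [← not_dep_iff (diff_subset.trans hCE)]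
      intro hdep
      have h1 := hC'.2 _ hdep diff_subset
      have : c ∈ C' \ {c} := h1.symm ▸ hc
      exact this.2 rfl
    have h2 := hNR.indep_ncard_le hfinN hind
    have h3 : (C' \ {c}).ncard = C'.ncard - 1 := ncard_diff_singleton_of_mem hc
    have h4 : 0 < C'.ncard := (ncard_pos hDfin).2 hC'.nonempty'
    omega

lemma flat_closure (M : Matroid α) (X : Set α) : M.IsFlat (M.closure X) := by
  rw [closure_def]
  have hne : Nonempty {F // M.IsFlat F ∧ X ∩ M.E ⊆ F} :=
    ⟨⟨M.E, M.ground_isFlat, inter_subset_right⟩⟩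
  have h := IsFlat.iInter (M := M) (Fs := fun F : {F // M.IsFlat F ∧ X ∩ M.E ⊆ F} => F.1)
    (fun F => F.2.1)
  convert h using 1
  rw [sInter_eq_iInter]
  rfl

lemma flat_of_closure_eq (hF : M.closure F = F) : M.IsFlat F := hF ▸ flat_closure M F

lemma indepHyperplane_iff (hfin : M.Finite) (hR : M.HasRank r) :
    M.IndepHyperplane H ↔
      M.Indep H ∧ (∀ x ∈ M.E \ H, M.Indep (insert x H)) ∧ H.ncard + 1 = r := by
  constructor
  · rintro ⟨⟨hflat, hne, hmax⟩, hind⟩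
    have hcl : M.closure H = H := hflat.closure
    have hHE : H ⊆ M.E := hflat.subset_ground
    have hins : ∀ x ∈ M.E \ H, M.Indep (insert x H) := by
      rintro x ⟨hxE, hxH⟩
      rw [hind.insert_indep_iff_of_notMem hxH, hcl]
      exact ⟨hxE, hxH⟩
    refine ⟨hind, hins, ?_⟩
    have hle : H.ncard ≤ r := hR.indep_ncard_le hfin hind
    have hHfin : H.Finite := hfin.setFinite hHE
    have hne' : H.ncard ≠ r := by
      intro hEq
      have hB : M.IsBase H := hR.base_of_indep_ncard hfin hind hEq.ge
      exact hne (hcl ▸ hB.closure_eq)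
    have hne2 : ¬ (H.ncard + 2 ≤ r) := by
      intro hle2
      obtain ⟨B, hB, hHB⟩ := hind.exists_isBase_superset
      have hssB : H ⊂ B := by
        refine ssubset_of_ne_of_subset (fun hEq => ?_) hHB
        rw [hEq] at hle2
        have := hR.base_ncard hB
        omega
      obtain ⟨x, hxB, hxH⟩ := exists_of_ssubset hssB
      have hxE : x ∈ M.E := hB.subset_ground hxB
      have hxind : M.Indep (insert x H) := hins x ⟨hxE, hxH⟩
      have hFflat : M.IsFlat (M.closure (insert x H)) := flat_closure M _
      have hHF : H ⊆ M.closure (insert x H) :=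
        (subset_insert x H).trans (M.subset_closure _ (insert_subset hxE hHE))
      rcases hmax _ hFflat hHF with hFH | hFE
      · have hxF : x ∈ M.closure (insert x H) :=
          M.mem_closure_of_mem (mem_insert x H) (insert_subset hxE hHE)
        exact hxH (hFH ▸ hxF)
      · have hbase : M.IsBase (insert x H) := isBase_iff_indep_closure_eq.2 ⟨hxind, hFE⟩
        have hcard := hR.base_ncard hbase
        rw [ncard_insert_of_notMem hxH hHfin] at hcard
        omega
    omega
  · rintro ⟨hind, hins, hcard⟩
    have hHE : H ⊆ M.E := hind.subset_ground
    have hHfin : H.Finite := hfin.setFinite hHE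
    have hcl : M.closure H = H := by
      refine subset_antisymm ?_ (M.subset_closure H hHE)
      intro x hx
      by_contra hxH
      have hxE : x ∈ M.E := mem_ground_of_mem_closure hx
      have h1 := hins x ⟨hxE, hxH⟩
      rw [hind.insert_indep_iff_of_notMem hxH] at h1
      exact h1.2 hx
    have hflat : M.IsFlat H := flat_of_closure_eq hcl
    refine ⟨⟨hflat, ?_, ?_⟩, hind⟩
    · intro hEq
      have hB : M.IsBase M.E := ground_indep_iff_isBase.1 (hEq ▸ hind)
      have := hR.base_ncard hB
      rw [← hEq] at this
      omega
    · intro F hF hHF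
      by_cases hFH : F = H
      · exact Or.inl hFH
      right
      obtain ⟨x, hxF, hxH⟩ := exists_of_ssubset (ssubset_of_ne_of_subset (Ne.symm hFH) hHF)
      have hxE : x ∈ M.E := hF.subset_ground hxF
      have hxind : M.Indep (insert x H) := hins x ⟨hxE, hxH⟩
      have hbase : M.IsBase (insert x H) := by
        refine hR.base_of_indep_ncard hfin hxind ?_
        rw [ncard_insert_of_notMem hxH hHfin]
        omega
      have hcls : M.closure (insert x H) = M.E := hbase.closure_eq
      have hsubF : insert x H ⊆ F := insert_subset hxF hHF
      have h2 : M.E ⊆ F := by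
        rw [← hcls, ← hF.closure]
        exact M.closure_subset_closure hsubF
      exact subset_antisymm hF.subset_ground h2

lemma IsContractElem.indepHyperplane_iff' (h : M.IsContractElem N e) (hfin : M.Finite)
    (hfinN : N.Finite) (heE : e ∈ M.E) (he : M.Indep {e}) (hR : M.HasRank r) :
    N.IndepHyperplane H ↔ e ∉ H ∧ M.IndepHyperplane (insert e H) := by
  rw [indepHyperplane_iff hfinN (h.hasRank hfin he hR), indepHyperplane_iff hfin hR]
  constructor
  · rintro ⟨hind, hins, hcard⟩
    obtain ⟨heH, hMind⟩ := (h.2 H).1 hind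
    have hHfin : H.Finite := hfinN.setFinite hind.subset_ground
    refine ⟨heH, hMind, ?_, ?_⟩
    · rintro x ⟨hxE, hxH⟩
      have hxe : x ≠ e := fun h' => hxH (h' ▸ mem_insert e H)
      have hxH' : x ∉ H := fun h' => hxH (mem_insert_of_mem _ h')
      have hxN : x ∈ N.E \ H := by rw [h.1]; exact ⟨⟨hxE, hxe⟩, hxH'⟩
      have h1 := (h.2 _).1 (hins x hxN)
      rw [insert_comm] at h1
      exact h1.2
    · rw [ncard_insert_of_notMem heH hHfin]
      omega
  · rintro ⟨heH, hMind, hins, hcard⟩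
    have hHfin : H.Finite := (hfin.setFinite hMind.subset_ground).subset (subset_insert e H)
    refine ⟨(h.2 H).2 ⟨heH, hMind⟩, ?_, ?_⟩
    · rintro x hx
      rw [h.1] at hx
      obtain ⟨⟨hxE, hxe⟩, hxH⟩ := hx
      have hxe' : x ≠ e := hxe
      have h1 : x ∈ M.E \ insert e H := ⟨hxE, by simp [hxe', hxH]⟩
      have h2 := hins x h1
      rw [h.2]
      refine ⟨?_, by rwa [insert_comm]⟩
      simp only [mem_insert_iff, not_or]
      exact ⟨fun h' => hxe' h'.symm, heH⟩
    · rw [ncard_insert_of_notMem heH hHfin] at hcard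
      omega

lemma IsContractElem.orientable (h : M.IsContractElem N e) (hfin : M.Finite)
    (hfinN : N.Finite) (heE : e ∈ M.E) (he : M.Indep {e}) (hor : M.Orientable) :
    N.Orientable := by
  classical
  obtain ⟨𝒞, c1, c2, c3, c4⟩ := hor
  set bar : (α → SignType) → (α → SignType) := fun X f => if f = e then 0 else X f with hbar
  have hsupp : ∀ X : α → SignType, {f | bar X f ≠ 0} = {f | X f ≠ 0} \ {e} := by
    intro X; ext f; by_cases hf : f = e <;> simp [hbar, hf]
  have hsigns : ∀ s : SignType, s ≠ 0 → s = 1 ∨ s = -1 := by decide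
  have hnegzero : ∀ s : SignType, -s = 0 ↔ s = 0 := by decide
  have hsuppfin : ∀ Z ∈ 𝒞, {g | Z g ≠ 0}.Finite :=
    fun Z hZ => hfin.setFinite (c1 Z hZ).1.subset_ground
  have hsuppne : ∀ Z ∈ 𝒞, {g | Z g ≠ 0} ≠ {e} := by
    intro Z hZ hEq
    have h1 := (c1 Z hZ).1
    rw [hEq] at h1
    exact (dep_iff.1 h1).1 he
  refine ⟨{Y | ∃ X ∈ 𝒞, Y = bar X ∧ N.Circuit ({f | X f ≠ 0} \ {e})}, ?_, ?_, ?_, ?_⟩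
  · rintro Y ⟨X, hX, rfl, hcirc⟩
    rwa [hsupp]
  · intro C' hC'
    obtain ⟨D, hD, hDsub, hDdiff⟩ := h.exists_circuit_of_circuit heE hfin hC'
    obtain ⟨X, hX, hXsupp⟩ := c2 D hD
    exact ⟨bar X, ⟨X, hX, rfl, by rw [hXsupp, hDdiff]; exact hC'⟩,
      by rw [hsupp, hXsupp, hDdiff]⟩
  · rintro Y ⟨X, hX, rfl, hcirc⟩
    refine ⟨fun g => -X g, c3 X hX, ?_, ?_⟩
    · funext g; by_cases hg : g = e <;> simp [hbar, hg]
    · have hEq : {f | (fun g => -X g) f ≠ 0} = {f | X f ≠ 0} := by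
        ext g; simp [hnegzero]
      rwa [hEq]
  · rintro Y1 ⟨X1, hX1, rfl, hcirc1⟩ Y2 ⟨X2, hX2, rfl, hcirc2⟩ hne f hf1 hf2
    have hfe : f ≠ e := by
      rintro rfl
      simp [hbar] at hf1
    have hX1f : X1 f = 1 := by simpa [hbar, hfe] using hf1
    have hX2f : X2 f = -1 := by simpa [hbar, hfe] using hf2
    have hneX : X1 ≠ fun g => -X2 g := by
      intro hEq
      apply hne
      funext g
      by_cases hg : g = e <;> simp [hbar, hg, congrFun hEq g]
    -- Lemma B: conformal repair with strictly smaller support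
    have lemB : ∀ n : ℕ, ∀ Z W : α → SignType, Z ∈ 𝒞 → W ∈ 𝒞 →
        {g | W g ≠ 0} ⊆ {g | Z g ≠ 0} ∪ {e} →
        ({g | W g ≠ 0} \ {e}) ⊂ ({g | Z g ≠ 0} \ {e}) →
        {g | g ≠ e ∧ W g ≠ 0 ∧ W g ≠ Z g}.ncard ≤ n →
        ∃ U ∈ 𝒞, ({g | U g ≠ 0} \ {e}) ⊂ ({g | Z g ≠ 0} \ {e}) ∧
          ∀ g, g ≠ e → U g ≠ 0 → U g = Z g := by
      intro n
      induction n with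
      | zero =>
        intro Z W hZ hW _ hss hcard
        have hΔfin : {g | g ≠ e ∧ W g ≠ 0 ∧ W g ≠ Z g}.Finite :=
          (hsuppfin W hW).subset (fun g hg => hg.2.1)
        have hΔ : {g | g ≠ e ∧ W g ≠ 0 ∧ W g ≠ Z g} = ∅ :=
          (ncard_eq_zero hΔfin).1 (Nat.le_zero.1 hcard)
        refine ⟨W, hW, hss, fun g hg hWg => ?_⟩
        by_contra hne'
        exact absurd (hΔ ▸ (⟨hg, hWg, hne'⟩ : g ∈ {g | g ≠ e ∧ W g ≠ 0 ∧ W g ≠ Z g}))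
          (notMem_empty g)
      | succ n ih =>
        intro Z W hZ hW hsub hss hcard
        by_cases hΔe : {g | g ≠ e ∧ W g ≠ 0 ∧ W g ≠ Z g} = ∅
        · refine ⟨W, hW, hss, fun g hg hWg => ?_⟩
          by_contra hne'
          exact absurd (hΔe ▸ (⟨hg, hWg, hne'⟩ : g ∈ {g | g ≠ e ∧ W g ≠ 0 ∧ W g ≠ Z g}))
            (notMem_empty g)
        · obtain ⟨g, hge, hWg, hWZ⟩ := nonempty_iff_ne_empty.2 hΔe
          have hZg : Z g ≠ 0 := by
            rcases hsub hWg with h'|h'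
            · exact h'
            · exact absurd h' hge
          have hsupp_ne : ¬ ({g | Z g ≠ 0} = {g | W g ≠ 0}) := by
            intro hEq
            rw [hEq] at hss
            exact (ssubset_irrefl _) hss
          have helim : ∃ U ∈ 𝒞, U g = 0 ∧
              (∀ x, (U x = 1 → Z x = 1 ∨ W x = 1) ∧ (U x = -1 → Z x = -1 ∨ W x = -1)) := by
            rcases hsigns _ hZg with hz1 | hz1
            · have hw : W g = -1 := by
                rcases hsigns _ hWg with h'|h'
                · exact absurd (h'.trans hz1.symm) hWZ
                · exact h'
              have hnq : Z ≠ fun x => -W x := by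
                intro hEq
                apply hsupp_ne
                ext x
                simp only [mem_setOf_eq, congrFun hEq x, ne_eq, hnegzero]
              obtain ⟨U, hU, hUg, hUc⟩ := c4 Z hZ W hW hnq g hz1 hw
              exact ⟨U, hU, hUg, hUc⟩
            · have hw : W g = 1 := by
                rcases hsigns _ hWg with h'|h'
                · exact h'
                · exact absurd (h'.trans hz1.symm) hWZ
              have hnq : W ≠ fun x => -Z x := by
                intro hEq
                apply hsupp_ne
                ext x
                simp only [mem_setOf_eq, congrFun hEq x, ne_eq, hnegzero]
              obtain ⟨U, hU, hUg, hUc⟩ := c4 W hW Z hZ hnq g hw hz1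
              exact ⟨U, hU, hUg, fun x =>
                ⟨fun h' => ((hUc x).1 h').symm, fun h' => ((hUc x).2 h').symm⟩⟩
          obtain ⟨U1, hU1, hU1g, hU1conf⟩ := helim
          have hU1sub : {x | U1 x ≠ 0} ⊆ {x | Z x ≠ 0} ∪ {e} := by
            intro x hx
            rcases hsigns _ hx with h'|h'
            · rcases (hU1conf x).1 h' with h''|h''
              · exact Or.inl (by simp [h''])
              · exact hsub (by simp [h''])
            · rcases (hU1conf x).2 h' with h''|h''
              · exact Or.inl (by simp [h''])
              · exact hsub (by simp [h''])
          have hU1ss : {x | U1 x ≠ 0} \ {e} ⊂ {x | Z x ≠ 0} \ {e} := by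
            have hsub' : {x | U1 x ≠ 0} \ {e} ⊆ {x | Z x ≠ 0} \ {e} := by
              rintro x ⟨hx, hxe⟩
              rcases hU1sub hx with h'|h'
              · exact ⟨h', hxe⟩
              · exact absurd h' hxe
            rw [ssubset_iff_of_subset hsub']
            exact ⟨g, ⟨hZg, hge⟩, fun h' => h'.1 hU1g⟩
          have hΔ1 : {x | x ≠ e ∧ U1 x ≠ 0 ∧ U1 x ≠ Z x} ⊆
              {x | x ≠ e ∧ W x ≠ 0 ∧ W x ≠ Z x} \ {g} := by
            rintro x ⟨hxe, hU1x, hU1Zx⟩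
            have hxg : x ≠ g := fun hEq => hU1x (hEq ▸ hU1g)
            refine ⟨⟨hxe, ?_⟩, by simp [hxg]⟩
            rcases hsigns _ hU1x with h'|h'
            · rcases (hU1conf x).1 h' with h''|h''
              · exact absurd (h'.trans h''.symm) hU1Zx
              · refine ⟨by simp [h''], fun hWZx => hU1Zx (by rw [h', ← hWZx, h''])⟩
            · rcases (hU1conf x).2 h' with h''|h''
              · exact absurd (h'.trans h''.symm) hU1Zx
              · refine ⟨by simp [h''], fun hWZx => hU1Zx (by rw [h', ← hWZx, h''])⟩
          have hΔfin : {x | x ≠ e ∧ W x ≠ 0 ∧ W x ≠ Z x}.Finite :=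
            (hsuppfin W hW).subset (fun x hx => hx.2.1)
          have hcard1 : {x | x ≠ e ∧ U1 x ≠ 0 ∧ U1 x ≠ Z x}.ncard ≤ n := by
            have h1 : {x | x ≠ e ∧ U1 x ≠ 0 ∧ U1 x ≠ Z x}.ncard ≤
                ({x | x ≠ e ∧ W x ≠ 0 ∧ W x ≠ Z x} \ {g}).ncard :=
              ncard_le_ncard hΔ1 hΔfin.diff
            have h2 : ({x | x ≠ e ∧ W x ≠ 0 ∧ W x ≠ Z x} \ {g}).ncard <
                {x | x ≠ e ∧ W x ≠ 0 ∧ W x ≠ Z x}.ncard :=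
              ncard_diff_singleton_lt_of_mem ⟨hge, hWg, hWZ⟩ hΔfin
            omega
          exact ih Z U1 hZ hU1 hU1sub hU1ss hcard1
    -- a minimal conformal Z with Z f = 0
    obtain ⟨Z0, hZ0, hZ0f, hZ0conf⟩ := c4 X1 hX1 X2 hX2 hneX f hX1f hX2f
    set S : Set (α → SignType) := {Z | Z ∈ 𝒞 ∧ Z f = 0 ∧ ∀ g, g ≠ e →
      (Z g = 1 → X1 g = 1 ∨ X2 g = 1) ∧ (Z g = -1 → X1 g = -1 ∨ X2 g = -1)} with hSdef
    have hex : ∃ n, ∃ Z ∈ S, ({g | Z g ≠ 0} \ {e}).ncard = n :=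
      ⟨_, Z0, ⟨hZ0, hZ0f, fun g _ => hZ0conf g⟩, rfl⟩
    obtain ⟨Z, hZS, hZcard⟩ := Nat.find_spec hex
    obtain ⟨hZ𝒞, hZf, hZconf⟩ := hZS
    have hcirc : N.Circuit ({g | Z g ≠ 0} \ {e}) := by
      set C := {g | Z g ≠ 0} with hCdef
      have hCcirc : M.Circuit C := c1 Z hZ𝒞
      have hCne : C ≠ {e} := hsuppne Z hZ𝒞
      have hdep : N.Dep (C \ {e}) := h.dep_diff_circuit heE hCcirc hCne
      obtain ⟨C', hC'sub, hC'⟩ := exists_circuit_subset' hfinN hdep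
      by_cases hCeq : C' = C \ {e}
      · rwa [← hCeq]
      exfalso
      have hss : C' ⊂ C \ {e} := ssubset_of_ne_of_subset hCeq hC'sub
      obtain ⟨D, hD, hDsub, hDdiff⟩ := h.exists_circuit_of_circuit heE hfin hC'
      have heD : e ∈ D := by
        by_contra heD
        have hDC' : D = C' := by rw [← hDdiff, diff_singleton_eq_self heD]
        have hDC : D = C := hCcirc.2 D hD.1 (hDC' ▸ (hss.subset.trans diff_subset))
        rw [hDC] at hDC'
        rw [← hDC'] at hss
        exact (lt_irrefl _ (lt_of_lt_of_le hss diff_subset))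
      have heC : e ∉ C := by
        intro heC
        have hcc := h.circuit_diff heE hCcirc heC
        exact hCeq (hcc.2 C' hC'.1 hC'sub)
      obtain ⟨W, hW, hWsupp⟩ := c2 D hD
      have hCdiff : C \ {e} = C := diff_singleton_eq_self heC
      have hWsub : {g | W g ≠ 0} ⊆ C ∪ {e} := by
        rw [hWsupp]
        intro x hxD
        by_cases hxe : x = e
        · exact Or.inr (by simp [hxe])
        · have hx' : x ∈ C' := hDdiff ▸ (⟨hxD, hxe⟩ : x ∈ D \ {e})
          exact Or.inl (diff_subset (hss.subset hx'))
      have hWss : {g | W g ≠ 0} \ {e} ⊂ C \ {e} := by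
        rw [hWsupp, hDdiff]
        exact hss
      obtain ⟨U, hU, hUss, hUagree⟩ := lemB _ Z W hZ𝒞 hW hWsub hWss le_rfl
      have hUf : U f = 0 := by
        by_contra hUf
        have h1 := hUagree f hfe hUf
        rw [hZf] at h1
        exact hUf h1
      have hUS : U ∈ S := by
        refine ⟨hU, hUf, fun g hg => ⟨fun h1 => ?_, fun h1 => ?_⟩⟩
        · exact (hZconf g hg).1 (by rw [← hUagree g hg (by simp [h1])]; exact h1)
        · exact (hZconf g hg).2 (by rw [← hUagree g hg (by simp [h1])]; exact h1)
      have hlt : ({g | U g ≠ 0} \ {e}).ncard < Nat.find hex := by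
        rw [← hZcard]
        exact ncard_lt_ncard hUss (hsuppfin Z hZ𝒞).diff
      exact Nat.find_min hex hlt ⟨U, hUS, rfl⟩
    refine ⟨bar Z, ⟨Z, hZ𝒞, rfl, hcirc⟩, by simp [hbar, hfe, hZf], ?_⟩
    intro g
    constructor
    · intro hg1
      have hge : g ≠ e := by
        rintro rfl
        simp [hbar] at hg1
      have hZg : Z g = 1 := by simpa [hbar, hge] using hg1
      rcases (hZconf g hge).1 hZg with h'|h'
      · exact Or.inl (by simpa [hbar, hge] using h')
      · exact Or.inr (by simpa [hbar, hge] using h')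
    · intro hg1
      have hge : g ≠ e := by
        rintro rfl
        simp [hbar] at hg1
      have hZg : Z g = -1 := by simpa [hbar, hge] using hg1
      rcases (hZconf g hge).2 hZg with h'|h'
      · exact Or.inl (by simpa [hbar, hge] using h')
      · exact Or.inr (by simpa [hbar, hge] using h')

end Matroid

/-- If every simple rank-3 oriented matroid on `n ≥ 8` elements has at least `6n/13`
independent hyperplanes, then every oriented paving matroid of rank `r ≥ 3` on
`n ≥ 5 + r` elements has at least `(12 / (13 (r - 1))) * C(n, r - 2)` independent
hyperplanes. -/
theorem paving_indepHyperplanes_bound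
    (hyp : ∀ M : Matroid α, M.Finite → M.Orientable → M.Simple' → M.HasRank 3 →
      8 ≤ M.E.ncard →
      6 * (M.E.ncard : ℚ) / 13 ≤ ({H | M.IndepHyperplane H}.ncard : ℚ)) :
    ∀ (M : Matroid α) (r : ℕ), M.Finite → M.Orientable → M.Paving → M.HasRank r →
      3 ≤ r → 5 + r ≤ M.E.ncard →
      12 / (13 * ((r : ℚ) - 1)) * ((M.E.ncard.choose (r - 2) : ℕ) : ℚ) ≤
        ({H | M.IndepHyperplane H}.ncard : ℚ) := by
  intro M r
  induction r using Nat.strong_induction_on generalizing M with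
  | _ r IH =>
  intro hfin hor hP hR hr3 hn
  classical
  have hloopless : ∀ e ∈ M.E, M.Indep {e} := fun e he =>
    Matroid.paving_indep_small hfin hP hR (singleton_subset_iff.2 he)
      (by rw [ncard_singleton]; omega)
  by_cases hr : r = 3
  · subst hr
    have hsimple : M.Simple' := fun I hI _ hI2 =>
      Matroid.paving_indep_small hfin hP hR hI (by omega)
    have hb := hyp M hfin hor hsimple hR (by omega)
    have hEq : (12:ℚ) / (13 * (((3:ℕ):ℚ) - 1)) * ((M.E.ncard.choose (3 - 2) : ℕ) : ℚ)
        = 6 * (M.E.ncard : ℚ) / 13 := by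
      rw [show (3:ℕ) - 2 = 1 from rfl, Nat.choose_one_right]
      push_cast
      ring
    rw [hEq]
    exact hb
  · have hr4 : 4 ≤ r := by omega
    set n := M.E.ncard with hn_def
    have hEfin := hfin.ground_finite
    have hcon : ∀ e : α, ∃ N : Matroid α, e ∈ M.E → (M.IsContractElem N e ∧ N.Finite) := by
      intro e
      by_cases he : e ∈ M.E
      · obtain ⟨N, h1, h2⟩ := Matroid.exists_isContractElem hfin (hloopless e he)
        exact ⟨N, fun _ => ⟨h1, h2⟩⟩
      · exact ⟨M, fun h => absurd h he⟩
    choose Ncon hNcon using hcon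
    have hIHfin : {H | M.IndepHyperplane H}.Finite :=
      hEfin.finite_subsets.subset (fun H hH => hH.1.1.subset_ground)
    set 𝒦 : Finset (Set α) := hIHfin.toFinset with h𝒦
    set Efin : Finset α := hEfin.toFinset with hEfin_def
    have hKcard : ∀ K ∈ 𝒦, K.ncard = r - 1 := by
      intro K hK
      have hK' : M.IndepHyperplane K := by
        rwa [h𝒦, Set.Finite.mem_toFinset] at hK
      have := ((Matroid.indepHyperplane_iff hfin hR).1 hK').2.2
      omega
    have hbijcard : ∀ e ∈ M.E, {H | (Ncon e).IndepHyperplane H}.ncard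
        = (𝒦.filter (fun K => e ∈ K)).card := by
      intro e he
      obtain ⟨hce, hcefin⟩ := hNcon e he
      have hiff : ∀ H, (Ncon e).IndepHyperplane H ↔ e ∉ H ∧ M.IndepHyperplane (insert e H) :=
        fun H => hce.indepHyperplane_iff' hfin hcefin he (hloopless e he) hR
      have himg : (insert e ·) '' {H | (Ncon e).IndepHyperplane H}
          = ↑(𝒦.filter (fun K => e ∈ K)) := by
        ext K
        simp only [mem_image, mem_setOf_eq, Finset.coe_filter, h𝒦, Set.Finite.mem_toFinset]
        constructor
        · rintro ⟨H, hH, rfl⟩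
          obtain ⟨heH, hKIH⟩ := (hiff H).1 hH
          exact ⟨hKIH, mem_insert e H⟩
        · rintro ⟨hKIH, heK⟩
          refine ⟨K \ {e}, (hiff _).2 ⟨by simp, ?_⟩, ?_⟩
          · rwa [insert_diff_singleton, insert_eq_of_mem heK]
          · rw [insert_diff_singleton, insert_eq_of_mem heK]
      rw [← Set.ncard_coe_finset, ← himg]
      symm
      apply Set.ncard_image_of_injOn
      intro H1 h1 H2 h2 hEq2
      have he1 : e ∉ H1 := ((hiff H1).1 h1).1
      have he2 : e ∉ H2 := ((hiff H2).1 h2).1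
      have hEq2' : insert e H1 = insert e H2 := hEq2
      rw [← insert_diff_self_of_notMem he1, hEq2', insert_diff_self_of_notMem he2]
    have hsum : ∑ e ∈ Efin, {H | (Ncon e).IndepHyperplane H}.ncard = 𝒦.card * (r - 1) := by
      have h1 : ∑ e ∈ Efin, {H | (Ncon e).IndepHyperplane H}.ncard
          = ∑ e ∈ Efin, (𝒦.filter (fun K => e ∈ K)).card := by
        refine Finset.sum_congr rfl (fun e he => ?_)
        exact hbijcard e (by rwa [hEfin_def, Set.Finite.mem_toFinset] at he)
      rw [h1]
      have h2 : ∀ e, (𝒦.filter (fun K => e ∈ K)).card = ∑ K ∈ 𝒦, if e ∈ K then 1 else 0 :=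
        fun e => Finset.card_filter _ _
      simp_rw [h2]
      rw [Finset.sum_comm]
      have h3 : ∀ K ∈ 𝒦, (∑ e ∈ Efin, if e ∈ K then 1 else 0) = r - 1 := by
        intro K hK
        rw [← Finset.card_filter]
        have hK' : M.IndepHyperplane K := by rwa [h𝒦, Set.Finite.mem_toFinset] at hK
        have hKE : K ⊆ M.E := hK'.1.1.subset_ground
        have hKfin : K.Finite := hEfin.subset hKE
        have hfilt : Efin.filter (fun e => e ∈ K) = hKfin.toFinset := by
          ext x
          simp only [Finset.mem_filter, Set.Finite.mem_toFinset, hEfin_def]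
          exact ⟨fun h => h.2, fun h => ⟨hKE h, h⟩⟩
        rw [hfilt, ← Set.ncard_eq_toFinset_card K hKfin, hKcard K hK]
      rw [Finset.sum_congr rfl h3, Finset.sum_const, smul_eq_mul]
    have hNbound : ∀ e ∈ M.E,
        (12:ℚ) / (13 * (((r - 1 : ℕ) : ℚ) - 1)) * ((((n-1).choose ((r-1) - 2)) : ℕ) : ℚ)
        ≤ ({H | (Ncon e).IndepHyperplane H}.ncard : ℚ) := by
      intro e he
      obtain ⟨hce, hcefin⟩ := hNcon e he
      have hNE : (Ncon e).E.ncard = n - 1 := by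
        rw [hce.1, ncard_diff_singleton_of_mem he]
      have hNor : (Ncon e).Orientable :=
        hce.orientable hfin hcefin he (hloopless e he) hor
      have hNP : (Ncon e).Paving :=
        hce.paving he (hloopless e he) hfin hcefin hP hR hr3
      have hNR : (Ncon e).HasRank (r-1) := hce.hasRank hfin (hloopless e he) hR
      have hb := IH (r-1) (by omega) (Ncon e) hcefin hNor hNP hNR (by omega)
        (by rw [hNE]; omega)
      rwa [hNE] at hb
    -- put it together
    set S := {H | M.IndepHyperplane H}.ncard with hS_def
    have h𝒦card : 𝒦.card = S := (Set.ncard_eq_toFinset_card _ hIHfin).symm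
    have hEcard : Efin.card = n := (Set.ncard_eq_toFinset_card _ hEfin).symm
    have hrc : ((r - 1 : ℕ) : ℚ) = (r:ℚ) - 1 := by
      rw [Nat.cast_sub (by omega : 1 ≤ r), Nat.cast_one]
    have hrc2 : ((r - 2 : ℕ) : ℚ) = (r:ℚ) - 2 := by
      rw [Nat.cast_sub (by omega : 2 ≤ r)]; norm_num
    have hsumQ : (n : ℚ) * ((12:ℚ) / (13 * ((r : ℚ) - 1 - 1)) *
        ((((n-1).choose ((r-1) - 2)) : ℕ) : ℚ)) ≤ (S : ℚ) * ((r : ℚ) - 1) := by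
      have h1 : ∑ _e ∈ Efin, ((12:ℚ) / (13 * (((r - 1 : ℕ) : ℚ) - 1)) *
          ((((n-1).choose ((r-1) - 2)) : ℕ) : ℚ))
          ≤ ∑ e ∈ Efin, ({H | (Ncon e).IndepHyperplane H}.ncard : ℚ) := by
        refine Finset.sum_le_sum (fun e he => ?_)
        exact hNbound e (by rwa [hEfin_def, Set.Finite.mem_toFinset] at he)
      rw [Finset.sum_const, hEcard, nsmul_eq_mul] at h1
      have h2 : (∑ e ∈ Efin, ({H | (Ncon e).IndepHyperplane H}.ncard : ℚ))
          = ((𝒦.card * (r - 1) : ℕ) : ℚ) := by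
        rw [← hsum, Nat.cast_sum]
      rw [h2, Nat.cast_mul, h𝒦card, hrc] at h1
      exact h1
    have hsub32 : (r - 1) - 2 = r - 3 := by omega
    have hchoose : n * ((n-1).choose (r-3)) = (n.choose (r-2)) * (r-2) := by
      have h1 : n - 1 + 1 = n := by omega
      have h2 : r - 3 + 1 = r - 2 := by omega
      calc n * ((n-1).choose (r-3)) = (n - 1 + 1) * ((n-1).choose (r-3)) := by rw [h1]
      _ = ((n-1) + 1).choose ((r-3) + 1) * ((r-3) + 1) := Nat.add_one_mul_choose_eq (n-1) (r-3)
      _ = (n.choose (r-2)) * (r-2) := by rw [h1, h2]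
    rw [hsub32] at hsumQ
    have key : (n : ℚ) * (((n-1).choose (r-3) : ℕ) : ℚ)
        = ((n.choose (r-2) : ℕ) : ℚ) * ((r:ℚ) - 2) := by
      rw [← hrc2]
      exact_mod_cast congrArg (Nat.cast (R := ℚ)) hchoose
    set x : ℚ := (r : ℚ) with hx_def
    set a : ℚ := ((n.choose (r-2) : ℕ) : ℚ) with ha_def
    set a' : ℚ := (((n-1).choose (r-3) : ℕ) : ℚ) with ha'_def
    set sq : ℚ := (S : ℚ) with hsq_def
    have hx4 : (4:ℚ) ≤ x := by rw [hx_def]; exact_mod_cast hr4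
    have hx2 : (0:ℚ) < x - 2 := by linarith
    have hx1 : (0:ℚ) < x - 1 := by linarith
    have e1 : (n:ℚ) * (12 / (13 * (x - 1 - 1)) * a') = 12 * a / 13 := by
      have h1 : (n:ℚ) * (12 / (13 * (x - 1 - 1)) * a') = 12 / (13 * (x - 2)) * ((n:ℚ) * a') := by
        ring
      rw [h1, key]
      field_simp
    rw [e1] at hsumQ
    rw [div_mul_eq_mul_div, div_le_iff₀ (by positivity : (0:ℚ) < 13 * (x - 1))]
    nlinarith [hsumQ]
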